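/- If A = [[a,b],[c,d]] ∈ M_2(𝕋) has tropical determinant |A| = max(a+d, b+c) equal to −∞, then A has a generalized inverse: there exists B ∈ M_2(𝕋) with A·B·A = A and B·A·B = B. -/

import Mathlib

/-- The tropical semiring `𝕋 = ℝ ∪ {−∞}` (addition = max, multiplication = +,
with `⊥ = −∞` absorbing for `+`). -/
abbrev Trop : Type := WithBot ℝ

/-- Tropical product of 2×2 matrices: `(A⊙B)_{ik} = max_j (a_{ij} + b_{jk})`. -/
noncomputable def tmul (A B : Matrix (Fin 2) (Fin 2) Trop) : Matrix (Fin 2) (Fin 2) Trop :=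
  Matrix.of fun i k => max (A i 0 + B 0 k) (A i 1 + B 1 k)

/-- Entrywise "tropical negation": `⊥ ↦ ⊥`, `x ↦ -x`. -/
noncomputable def ncg : Trop → Trop := WithBot.map Neg.neg

set_option maxHeartbeats 2000000 in
/-- If `A = [[a,b],[c,d]] ∈ M₂(𝕋)` has tropical determinant
`|A| = max (a+d) (b+c) = −∞`, then `A` has a generalized inverse. -/
theorem stmt4 (a b c d : Trop)
    (hdet : max (a + d) (b + c) = ⊥) :
    ∃ B : Matrix (Fin 2) (Fin 2) Trop,
      tmul (tmul !![a, b; c, d] B) !![a, b; c, d] = !![a, b; c, d] ∧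
      tmul (tmul B !![a, b; c, d]) B = B := by
  rw [max_eq_bot, WithBot.add_eq_bot, WithBot.add_eq_bot] at hdet
  refine ⟨!![ncg a, ncg c; ncg b, ncg d], ?_, ?_⟩ <;>
  obtain ⟨rfl | rfl, rfl | rfl⟩ := hdet
  case' refine_1.inl.inl => rcases c with _ | c <;> rcases d with _ | d
  case' refine_1.inl.inr => rcases b with _ | b <;> rcases d with _ | d
  case' refine_1.inr.inl => rcases a with _ | a <;> rcases c with _ | c
  case' refine_1.inr.inr => rcases a with _ | a <;> rcases b with _ | b
  case' refine_2.inl.inl => rcases c with _ | c <;> rcases d with _ | d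
  case' refine_2.inl.inr => rcases b with _ | b <;> rcases d with _ | d
  case' refine_2.inr.inl => rcases a with _ | a <;> rcases c with _ | c
  case' refine_2.inr.inr => rcases a with _ | a <;> rcases b with _ | b
  all_goals
    ext i k
    fin_cases i <;> fin_cases k <;>
      simp [tmul, ncg, WithBot.none_eq_bot, WithBot.some_eq_coe, WithBot.map_bot,
        WithBot.map_coe, ← WithBot.coe_add, le_max_iff, max_le_iff]
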